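/- (Proposition 3, part 1) Assume α₁ = α₂ = 1/2, J₁₁ = J₂₂ > 0, J₁₂ < 0, h₁ = h₂ = 0, and set λ_M = J₁₁ − J₁₂ and t = 2/(βλ_M). For even N let N₁ = N₂ = N/2 and let p_N = (1/N)·log Z_N be the pressure. Then: if t ≥ 1, the limit of p_N over even N → ∞ equals log 2 (i.e., log 2 + f(0,0)); if t < 1, the limit equals log 2 + f(x̃,−x̃), where x̃ is the unique solution in (0,1) of x = tanh((βλ_M/2)·x). -/

import Mathlib

open Finset Filter

/-- The entropy function 𝓘(x) = ((1+x)log(1+x) + (1-x)log(1-x))/2.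
Note `Real.log 0 = 0` in Mathlib, which implements the convention 0·log 0 = 0. -/
noncomputable def entI (x : ℝ) : ℝ :=
  ((1 + x) * Real.log (1 + x) + (1 - x) * Real.log (1 - x)) / 2

/-- Pressure functional of the symmetric zero-field bipartite mean-field model. -/
noncomputable def fSym (β J11 J12 : ℝ) (μ : ℝ × ℝ) : ℝ :=
  β / 8 * (J11 * (μ.1 ^ 2 + μ.2 ^ 2) + 2 * J12 * μ.1 * μ.2) - (entI μ.1 + entI μ.2) / 2

/-- The value of a spin encoded by a Boolean. -/
noncomputable def spin (b : Bool) : ℝ := if b then 1 else -1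

/-- The Hamiltonian density g(μ₁,μ₂) = (1/8)(J₁₁(μ₁² + μ₂²) + 2J₁₂μ₁μ₂) of the
symmetric zero-field model. -/
noncomputable def gSym (J11 J12 μ1 μ2 : ℝ) : ℝ :=
  (1 / 8) * (J11 * (μ1 ^ 2 + μ2 ^ 2) + 2 * J12 * μ1 * μ2)

/-- Magnetization of the first block (the first n spins out of n + n). -/
noncomputable def mag1 (n : ℕ) (σ : Fin (n + n) → Bool) : ℝ :=
  (1 / (n : ℝ)) * ∑ i : Fin (n + n), if (i : ℕ) < n then spin (σ i) else 0

/-- Magnetization of the second block (the last n spins out of n + n). -/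
noncomputable def mag2 (n : ℕ) (σ : Fin (n + n) → Bool) : ℝ :=
  (1 / (n : ℝ)) * ∑ i : Fin (n + n), if n ≤ (i : ℕ) then spin (σ i) else 0

/-- The partition function of the symmetric zero-field model with N = n + n spins. -/
noncomputable def ZSym (β J11 J12 : ℝ) (n : ℕ) : ℝ :=
  ∑ σ : Fin (n + n) → Bool,
    Real.exp (β * ((n : ℝ) + n) * gSym J11 J12 (mag1 n σ) (mag2 n σ))

lemma entI_neg (x : ℝ) : entI (-x) = entI x := by
  unfold entI; ring_nf

lemma entI_zero : entI 0 = 0 := by simp [entI]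

lemma entI_one : entI 1 = Real.log 2 := by
  norm_num [entI]

lemma continuous_entI : Continuous entI := by
  have h1 : Continuous fun x : ℝ => (1 + x) * Real.log (1 + x) :=
    Real.continuous_mul_log.comp (continuous_const.add continuous_id)
  have h2 : Continuous fun x : ℝ => (1 - x) * Real.log (1 - x) :=
    Real.continuous_mul_log.comp (continuous_const.sub continuous_id)
  exact ((h1.add h2).div_const 2)

lemma hasDerivAt_entI {x : ℝ} (h1 : -1 < x) (h2 : x < 1) :
    HasDerivAt entI ((Real.log (1 + x) - Real.log (1 - x)) / 2) x := by
  have hp : (0:ℝ) < 1 + x := by linarith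
  have hm : (0:ℝ) < 1 - x := by linarith
  have d1 : HasDerivAt (fun y : ℝ => 1 + y) 1 x := by
    simpa using (hasDerivAt_id x).const_add 1
  have d2 : HasDerivAt (fun y : ℝ => 1 - y) (-1) x := by
    simpa using (hasDerivAt_id x).const_sub 1
  have l1 : HasDerivAt (fun y : ℝ => Real.log (1 + y)) (1 / (1 + x)) x := by
    simpa [Function.comp_def] using (Real.hasDerivAt_log hp.ne').comp x d1
  have l2 : HasDerivAt (fun y : ℝ => Real.log (1 - y)) (-(1 / (1 - x))) x := by
    have := (Real.hasDerivAt_log hm.ne').comp x d2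
    simpa [Function.comp_def] using this
  have m1 : HasDerivAt (fun y : ℝ => (1 + y) * Real.log (1 + y))
      (Real.log (1 + x) + 1) x := by
    have := d1.mul l1
    refine this.congr_deriv ?_
    field_simp
  have m2 : HasDerivAt (fun y : ℝ => (1 - y) * Real.log (1 - y))
      (-(Real.log (1 - x) + 1)) x := by
    have := d2.mul l2
    refine this.congr_deriv ?_
    field_simp
    ring
  have : HasDerivAt (fun y : ℝ => ((1 + y) * Real.log (1 + y) + (1 - y) * Real.log (1 - y)) / 2)
      ((Real.log (1 + x) + 1 + -(Real.log (1 - x) + 1)) / 2) x := (m1.add m2).div_const 2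
  refine this.congr_deriv ?_
  ring

lemma aux_deriv_logs {y : ℝ} (h1 : -1 < y) (h2 : y < 1) :
    HasDerivAt (fun z : ℝ => Real.log (1 + z) - Real.log (1 - z))
      (1 / (1 + y) + 1 / (1 - y)) y := by
  have hp : (0:ℝ) < 1 + y := by linarith
  have hm : (0:ℝ) < 1 - y := by linarith
  have d1 : HasDerivAt (fun z : ℝ => 1 + z) 1 y := by
    simpa using (hasDerivAt_id y).const_add 1
  have d2 : HasDerivAt (fun z : ℝ => 1 - z) (-1) y := by
    simpa using (hasDerivAt_id y).const_sub 1
  have l1 : HasDerivAt (fun z : ℝ => Real.log (1 + z)) (1 / (1 + y)) y := by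
    simpa [Function.comp_def] using (Real.hasDerivAt_log hp.ne').comp y d1
  have l2 : HasDerivAt (fun z : ℝ => Real.log (1 - z)) (-(1 / (1 - y))) y := by
    simpa [Function.comp_def] using (Real.hasDerivAt_log hm.ne').comp y d2
  have := l1.sub l2
  refine this.congr_deriv ?_
  ring

lemma mono_from_deriv {f : ℝ → ℝ} {f' : ℝ → ℝ}
    (hf : ∀ y ∈ Set.Ioo (-1 : ℝ) 1, HasDerivAt f (f' y) y)
    (hc : ContinuousOn f (Set.Ico 0 1))
    (h0 : ∀ y ∈ Set.Ioo (0 : ℝ) 1, 0 ≤ f' y) :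
    MonotoneOn f (Set.Ico 0 1) := by
  apply monotoneOn_of_deriv_nonneg (convex_Ico 0 1) hc
  · intro y hy
    rw [interior_Ico] at hy
    exact (hf y ⟨by linarith [hy.1], hy.2⟩).differentiableAt.differentiableWithinAt
  · intro y hy
    rw [interior_Ico] at hy
    rw [(hf y ⟨by linarith [hy.1], hy.2⟩).deriv]
    exact h0 y hy

lemma log_ratio_ge {x : ℝ} (hx : 0 ≤ x) (h1 : x < 1) :
    2 * x ≤ Real.log (1 + x) - Real.log (1 - x) := by
  set k : ℝ → ℝ := fun y => Real.log (1 + y) - Real.log (1 - y) - 2 * y with hk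
  have hd : ∀ y ∈ Set.Ioo (-1 : ℝ) 1, HasDerivAt k (1 / (1 + y) + 1 / (1 - y) - 2) y := by
    intro y hy
    have := (aux_deriv_logs hy.1 hy.2).sub ((hasDerivAt_id y).const_mul 2)
    simp only [hk]
    exact this.congr_deriv (by ring)
  have hc : ContinuousOn k (Set.Ico 0 1) := by
    intro y hy
    exact ((hd y ⟨by linarith [hy.1], hy.2⟩).continuousAt).continuousWithinAt
  have hmono : MonotoneOn k (Set.Ico 0 1) := by
    apply mono_from_deriv hd hc
    intro y hy
    have hp : (0:ℝ) < 1 + y := by linarith [hy.1]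
    have hm : (0:ℝ) < 1 - y := by linarith [hy.2]
    have : 1 / (1 + y) + 1 / (1 - y) - 2 = 2 * y ^ 2 / ((1 + y) * (1 - y)) := by
      field_simp
      ring
    rw [this]
    positivity
  have := hmono (Set.left_mem_Ico.2 one_pos) ⟨hx, h1⟩ hx
  simp only [hk] at this
  simp at this
  linarith [this]

lemma log_ratio_le {x : ℝ} (hx : 0 ≤ x) (h1 : x < 1) :
    Real.log (1 + x) - Real.log (1 - x) ≤ 2 * x / (1 - x ^ 2) := by
  set m : ℝ → ℝ := fun y => 2 * y / (1 - y ^ 2) - (Real.log (1 + y) - Real.log (1 - y)) with hm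
  have hd : ∀ y ∈ Set.Ioo (-1 : ℝ) 1, HasDerivAt m
      ((2 + 2 * y ^ 2) / (1 - y ^ 2) ^ 2 - (1 / (1 + y) + 1 / (1 - y))) y := by
    intro y hy
    have hden : (1 : ℝ) - y ^ 2 ≠ 0 := by nlinarith [hy.1, hy.2]
    have dnum : HasDerivAt (fun z : ℝ => 2 * z) 2 y := by
      simpa [mul_comm] using (hasDerivAt_id y).const_mul 2
    have dden : HasDerivAt (fun z : ℝ => 1 - z ^ 2) (-(2 * y)) y := by
      simpa using ((hasDerivAt_pow 2 y)).const_sub 1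
    have ddiv := dnum.div dden hden
    have := ddiv.sub (aux_deriv_logs hy.1 hy.2)
    refine this.congr_deriv ?_
    field_simp
    ring
  have hc : ContinuousOn m (Set.Ico 0 1) := by
    intro y hy
    exact ((hd y ⟨by linarith [hy.1], hy.2⟩).continuousAt).continuousWithinAt
  have hmono : MonotoneOn m (Set.Ico 0 1) := by
    apply mono_from_deriv hd hc
    intro y hy
    have hp : (0:ℝ) < 1 + y := by linarith [hy.1]
    have hmm : (0:ℝ) < 1 - y := by linarith [hy.2]
    have : (2 + 2 * y ^ 2) / (1 - y ^ 2) ^ 2 - (1 / (1 + y) + 1 / (1 - y))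
        = 4 * y ^ 2 / (1 - y ^ 2) ^ 2 := by
      have h2 : (1:ℝ) - y ^ 2 = (1 + y) * (1 - y) := by ring
      rw [h2]
      field_simp
      ring
    rw [this]
    positivity
  have := hmono (Set.left_mem_Ico.2 one_pos) ⟨hx, h1⟩ hx
  simp only [hm] at this
  simp at this
  linarith [this]

lemma entI_ge_sq {x : ℝ} (h1 : -1 ≤ x) (h2 : x ≤ 1) : x ^ 2 / 2 ≤ entI x := by
  -- reduce to |x|
  have key : ∀ y : ℝ, 0 ≤ y → y ≤ 1 → y ^ 2 / 2 ≤ entI y := by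
    intro y hy0 hy1
    rcases eq_or_lt_of_le hy1 with rfl | hlt
    · rw [entI_one]
      have := Real.log_two_gt_d9
      norm_num
      linarith
    · set h : ℝ → ℝ := fun z => entI z - z ^ 2 / 2 with hh
      have hd : ∀ z ∈ Set.Ioo (-1 : ℝ) 1, HasDerivAt h
          ((Real.log (1 + z) - Real.log (1 - z)) / 2 - z) z := by
        intro z hz
        have := (hasDerivAt_entI hz.1 hz.2).sub
          (((hasDerivAt_pow 2 z)).div_const 2)
        exact this.congr_deriv (by norm_num)
      have hc : ContinuousOn h (Set.Ico 0 1) :=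
        (continuous_entI.sub (continuous_pow 2 |>.div_const 2)).continuousOn
      have hmono : MonotoneOn h (Set.Ico 0 1) := by
        apply mono_from_deriv hd hc
        intro z hz
        have := log_ratio_ge (le_of_lt hz.1) hz.2
        linarith
      have := hmono (Set.left_mem_Ico.2 one_pos) ⟨hy0, hlt⟩ hy0
      simp only [hh, entI_zero] at this
      simp at this
      linarith
  rcases le_or_gt 0 x with hx | hx
  · exact key x hx h2
  · have := key (-x) (by linarith) (by linarith)
    rw [entI_neg] at this
    simpa using this

lemma entI_le_sq {x : ℝ} (hx : 0 ≤ x) (h1 : x < 1) :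
    entI x ≤ x ^ 2 / (2 * (1 - x ^ 2)) := by
  set G : ℝ → ℝ := fun y => y ^ 2 / (2 * (1 - y ^ 2)) - entI y with hG
  have hd : ∀ y ∈ Set.Ioo (-1 : ℝ) 1, HasDerivAt G
      (y / (1 - y ^ 2) ^ 2 - (Real.log (1 + y) - Real.log (1 - y)) / 2) y := by
    intro y hy
    have hden : 2 * (1 - y ^ 2) ≠ 0 := by nlinarith [hy.1, hy.2]
    have dnum : HasDerivAt (fun z : ℝ => z ^ 2) (2 * y) y := by
      simpa using hasDerivAt_pow 2 y
    have dden : HasDerivAt (fun z : ℝ => 2 * (1 - z ^ 2)) (-(4 * y)) y := by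
      have := ((hasDerivAt_pow 2 y).const_sub 1).const_mul 2
      refine this.congr_deriv ?_
      simp
      ring
    have ddiv := dnum.div dden hden
    have := ddiv.sub (hasDerivAt_entI hy.1 hy.2)
    refine this.congr_deriv ?_
    have h2 : (1:ℝ) - y ^ 2 ≠ 0 := by nlinarith [hy.1, hy.2]
    field_simp
    ring
  have hc : ContinuousOn G (Set.Ico 0 1) := by
    intro y hy
    exact ((hd y ⟨by linarith [hy.1], hy.2⟩).continuousAt).continuousWithinAt
  have hmono : MonotoneOn G (Set.Ico 0 1) := by
    apply mono_from_deriv hd hc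
    intro y hy
    have h2 : (0:ℝ) < 1 - y ^ 2 := by nlinarith [hy.1, hy.2]
    have hle : (1 - y ^ 2) ^ 2 ≤ 1 - y ^ 2 := by nlinarith [hy.1, hy.2]
    have e1 : y / (1 - y ^ 2) ≤ y / (1 - y ^ 2) ^ 2 := by
      apply div_le_div_of_nonneg_left (le_of_lt hy.1) (by positivity) hle
    have := log_ratio_le (le_of_lt hy.1) hy.2
    have h3 : 2 * y / (1 - y ^ 2) = 2 * (y / (1 - y ^ 2)) := by ring
    have e2 : (Real.log (1 + y) - Real.log (1 - y)) / 2 ≤ y / (1 - y ^ 2) := by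
      rw [h3] at this
      linarith
    linarith
  have := hmono (Set.left_mem_Ico.2 one_pos) ⟨hx, h1⟩ hx
  simp only [hG, entI_zero] at this
  simp at this
  linarith

noncomputable def psiF (c x : ℝ) : ℝ := c * x ^ 2 - entI x

lemma psiF_neg (c x : ℝ) : psiF c (-x) = psiF c x := by
  unfold psiF; rw [entI_neg]; ring

lemma psiF_zero (c : ℝ) : psiF c 0 = 0 := by simp [psiF, entI_zero]

lemma psiF_nonpos {c x : ℝ} (hc : c ≤ 1 / 2) (h1 : -1 ≤ x) (h2 : x ≤ 1) :
    psiF c x ≤ 0 := by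
  have := entI_ge_sq h1 h2
  have hx2 : c * x ^ 2 ≤ x ^ 2 / 2 := by nlinarith [sq_nonneg x]
  unfold psiF
  linarith

lemma tanh_formula (t : ℝ) :
    Real.tanh t = (Real.exp (2 * t) - 1) / (Real.exp (2 * t) + 1) := by
  rw [Real.tanh_eq_sinh_div_cosh, Real.sinh_eq, Real.cosh_eq]
  have hu : 0 < Real.exp t := Real.exp_pos t
  have h2 : Real.exp (2 * t) = Real.exp t * Real.exp t := by
    rw [two_mul, Real.exp_add]
  rw [h2, Real.exp_neg]
  have h3 : Real.exp t * Real.exp t + 1 ≠ 0 := by positivity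
  have h4 : Real.exp t + (Real.exp t)⁻¹ ≠ 0 := by positivity
  field_simp

lemma tanh_of_log {x : ℝ} (h1 : -1 < x) (h2 : x < 1) :
    Real.tanh ((Real.log (1 + x) - Real.log (1 - x)) / 2) = x := by
  have hp : (0:ℝ) < 1 + x := by linarith
  have hm : (0:ℝ) < 1 - x := by linarith
  rw [tanh_formula]
  have h2t : 2 * ((Real.log (1 + x) - Real.log (1 - x)) / 2)
      = Real.log (1 + x) - Real.log (1 - x) := by ring
  rw [h2t, ← Real.log_div hp.ne' hm.ne', Real.exp_log (by positivity)]
  rw [div_sub_one hm.ne', div_add_one hm.ne']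
  rw [div_div_div_cancel_right₀]
  · have e1 : 1 + x - (1 - x) = 2 * x := by ring
    have e2 : 1 + x + (1 - x) = 2 := by ring
    rw [e1, e2]
    ring
  · exact hm.ne'

lemma psiF_max {c : ℝ} (hc : 1 / 2 < c) :
    ∃ xs : ℝ, xs ∈ Set.Ioo (0:ℝ) 1 ∧ (∀ y, -1 ≤ y → y ≤ 1 → psiF c y ≤ psiF c xs) ∧
      xs = Real.tanh (2 * c * xs) := by
  have hcont : Continuous (psiF c) :=
    (continuous_const.mul (continuous_pow 2)).sub continuous_entI
  obtain ⟨xs, hxs_mem, hmax'⟩ := (isCompact_Icc (a := (0:ℝ)) (b := 1)).exists_isMaxOn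
    (Set.nonempty_Icc.2 zero_le_one) hcont.continuousOn
  have hmax : ∀ y ∈ Set.Icc (0:ℝ) 1, psiF c y ≤ psiF c xs := hmax'
  -- a point with positive value
  have hδ : 0 < 1 - 1 / (2 * c) := by
    have : 1 / (2 * c) < 1 := by
      rw [div_lt_one (by linarith)]; linarith
    linarith
  set x0 : ℝ := Real.sqrt ((1 - 1 / (2 * c)) / 2) with hx0
  have hx0sq : x0 ^ 2 = (1 - 1 / (2 * c)) / 2 := Real.sq_sqrt (by linarith)
  have hx0pos : 0 < x0 := Real.sqrt_pos.2 (by linarith)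
  have hinv : 0 < 1 / (2 * c) := by positivity
  have hx0sqlt : x0 ^ 2 < 1 := by rw [hx0sq]; linarith
  have hx0lt : x0 < 1 := by nlinarith [hx0sqlt, hx0pos]
  have hpos : 0 < psiF c x0 := by
    have hle := entI_le_sq hx0pos.le hx0lt
    have h2 : (0:ℝ) < 1 - x0 ^ 2 := by nlinarith
    have hkey : x0 ^ 2 / (2 * (1 - x0 ^ 2)) < c * x0 ^ 2 := by
      rw [div_lt_iff₀ (by positivity)]
      have : 1 / (2 * c) < 1 - x0 ^ 2 := by
        rw [hx0sq]; rw [div_lt_iff₀ (by norm_num : (0:ℝ) < 2)] at *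
        nlinarith [hδ, hc]
      -- 1 < 2c(1 - x0^2)
      have h4 : 1 < 2 * c * (1 - x0 ^ 2) := by
        rw [div_lt_iff₀ (by linarith)] at this
        linarith [this]
      nlinarith [sq_nonneg x0, hx0pos]
    unfold psiF
    linarith
  have hxs_pos_val : 0 < psiF c xs :=
    lt_of_lt_of_le hpos (hmax x0 ⟨hx0pos.le, hx0lt.le⟩)
  have hxs_ne0 : xs ≠ 0 := by
    intro h
    rw [h, psiF_zero] at hxs_pos_val
    exact lt_irrefl 0 hxs_pos_val
  -- a point beating 1
  have hxs_ne1 : xs ≠ 1 := by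
    intro h1
    set ε : ℝ := min (1/2) (Real.exp (-(4 * c + 1))) with hε
    have hεpos : 0 < ε := lt_min (by norm_num) (Real.exp_pos _)
    have hεlt : ε < 1 := lt_of_le_of_lt (min_le_left _ _) (by norm_num)
    have hlogε : Real.log ε ≤ -(4 * c + 1) := by
      calc Real.log ε ≤ Real.log (Real.exp (-(4 * c + 1))) :=
            Real.log_le_log hεpos (min_le_right _ _)
        _ = -(4 * c + 1) := Real.log_exp _
    -- entropy bound near 1
    have hent : Real.log 2 - entI (1 - ε) ≥ -(ε / 2) * Real.log ε := by
      have he : entI (1 - ε) = ((2 - ε) * Real.log (2 - ε) + ε * Real.log ε) / 2 := by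
        unfold entI
        have : 1 + (1 - ε) = 2 - ε := by ring
        have h2 : 1 - (1 - ε) = ε := by ring
        rw [this, h2]
      rw [he]
      have hkey : (2 - ε) * Real.log (2 - ε) ≤ 2 * Real.log 2 := by
        have hl1 : Real.log (2 - ε) ≤ Real.log 2 :=
          Real.log_le_log (by linarith) (by linarith)
        have hl0 : 0 ≤ Real.log (2 - ε) := Real.log_nonneg (by linarith)
        nlinarith [hl1, hl0]
      linarith
    have hbeat : psiF c 1 < psiF c (1 - ε) := by
      have e1 : psiF c (1 - ε) - psiF c 1
          = -(c * ε * (2 - ε)) + (Real.log 2 - entI (1 - ε)) := by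
        unfold psiF
        rw [entI_one]
        ring
      have e2 : -(ε / 2) * Real.log ε ≥ ε * (2 * c + 1 / 2) := by
        have : -Real.log ε ≥ 4 * c + 1 := by linarith
        nlinarith [hεpos, this, hc]
      have hcpos : (0:ℝ) < c := by linarith
      have e3 : c * ε * (2 - ε) ≤ 2 * c * ε := by
        nlinarith [mul_pos (mul_pos hcpos hεpos) hεpos]
      have := hent
      nlinarith [hεpos, hc]
    have := hmax (1 - ε) ⟨by linarith, by linarith⟩
    rw [h1] at this
    linarith
  have hxs0 : 0 < xs := lt_of_le_of_ne hxs_mem.1 (Ne.symm hxs_ne0)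
  have hxs1 : xs < 1 := lt_of_le_of_ne hxs_mem.2 hxs_ne1
  -- critical point
  have hderiv : HasDerivAt (psiF c)
      (c * (2 * xs) - (Real.log (1 + xs) - Real.log (1 - xs)) / 2) xs := by
    have h1 : HasDerivAt (fun y : ℝ => c * y ^ 2) (c * (2 * xs)) xs := by
      have := (hasDerivAt_pow 2 xs).const_mul c
      simpa using this
    exact h1.sub (hasDerivAt_entI (by linarith) hxs1)
  have hloc : IsLocalMax (psiF c) xs :=
    hmax'.isLocalMax (Icc_mem_nhds hxs0 hxs1)
  have hzero := hloc.hasDerivAt_eq_zero hderiv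
  have hL : (Real.log (1 + xs) - Real.log (1 - xs)) / 2 = 2 * c * xs := by linarith
  refine ⟨xs, ⟨hxs0, hxs1⟩, ?_, ?_⟩
  · intro y hy1 hy2
    rcases le_or_gt 0 y with hy | hy
    · exact hmax y ⟨hy, hy2⟩
    · rw [← psiF_neg]
      exact hmax (-y) ⟨by linarith, by linarith⟩
  · rw [← hL, tanh_of_log (by linarith) hxs1]

section NatBounds

lemma nat_term_le (n k : ℕ) (hk : k ≤ n) :
    ∀ j, j ≤ n → n.choose j * k ^ j * (n - k) ^ (n - j)
      ≤ n.choose k * k ^ k * (n - k) ^ (n - k) := by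
  set t : ℕ → ℕ := fun j => n.choose j * k ^ j * (n - k) ^ (n - j) with ht
  intro j hj
  rcases Nat.eq_zero_or_pos n with rfl | hn
  · have hj0 : j = 0 := by omega
    have hk0 : k = 0 := by omega
    subst hj0; subst hk0; exact le_refl _
  rcases Nat.eq_zero_or_pos k with rfl | hkpos
  · rcases Nat.eq_zero_or_pos j with rfl | hjpos
    · exact le_refl _
    · simp [Nat.zero_pow hjpos]
  rcases eq_or_lt_of_le hk with rfl | hklt
  · rcases eq_or_lt_of_le hj with rfl | hjlt
    · exact le_refl _
    · have hnj : 0 < k - j := by omega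
      simp [Nat.sub_self, Nat.zero_pow hnj]
  -- now 0 < k < n
  have key : ∀ i, i < n → t (i+1) * ((i+1) * (n - k)) = t i * ((n - i) * k) := by
    intro i hi
    have e : n - i = (n - (i+1)) + 1 := by omega
    have h1 := Nat.choose_succ_right_eq n i
    rw [e] at h1
    simp only [ht]
    rw [e, pow_succ, pow_succ]
    calc n.choose (i+1) * (k ^ i * k) * (n - k) ^ (n - (i+1)) * ((i+1) * (n - k))
        = (n.choose (i+1) * (i+1)) * (k ^ i * k * ((n - k) ^ (n - (i+1)) * (n - k))) := by ring
      _ = (n.choose i * ((n - (i+1)) + 1)) * (k ^ i * k * ((n - k) ^ (n - (i+1)) * (n - k))) := by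
            rw [h1]
      _ = n.choose i * k ^ i * ((n - k) ^ (n - (i + 1)) * (n - k)) * (((n - (i+1)) + 1) * k) := by
            ring
  have hnk : 0 < n - k := by omega
  have up : ∀ i, i < k → t i ≤ t (i+1) := by
    intro i hik
    have hin : i < n := lt_of_lt_of_le hik hk
    have hineq : (i+1) * (n - k) ≤ (n - i) * k := by
      have h1 : i + 1 ≤ k := hik
      have h2 : n - k ≤ n - i := by omega
      calc (i+1) * (n - k) ≤ k * (n - i) := Nat.mul_le_mul h1 h2
        _ = (n - i) * k := Nat.mul_comm _ _
    have := key i hin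
    have hle : t i * ((i+1) * (n - k)) ≤ t (i+1) * ((i+1) * (n - k)) := by
      calc t i * ((i+1) * (n - k)) ≤ t i * ((n - i) * k) :=
            Nat.mul_le_mul_left _ hineq
        _ = t (i+1) * ((i+1) * (n - k)) := this.symm
    exact Nat.le_of_mul_le_mul_right hle (by positivity)
  have down : ∀ i, k ≤ i → i < n → t (i+1) ≤ t i := by
    intro i hik hin
    have hineq : (n - i) * k ≤ (i+1) * (n - k) := by
      have h1 : n - i ≤ n - k := by omega
      have h2 : k ≤ i + 1 := by omega
      calc (n - i) * k ≤ (n - k) * (i+1) := Nat.mul_le_mul h1 h2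
        _ = (i+1) * (n - k) := Nat.mul_comm _ _
    have := key i hin
    have hle : t (i+1) * ((i+1) * (n - k)) ≤ t i * ((i+1) * (n - k)) := by
      calc t (i+1) * ((i+1) * (n - k)) = t i * ((n - i) * k) := this
        _ ≤ t i * ((i+1) * (n - k)) := Nat.mul_le_mul_left _ hineq
    exact Nat.le_of_mul_le_mul_right hle (by positivity)
  rcases le_or_gt j k with hjk | hjk
  · -- climb up
    have claim : ∀ d i, i + d = k → t i ≤ t k := by
      intro d
      induction d with
      | zero => intro i hi; have : i = k := by omega
                subst this; exact le_refl _
      | succ d ih =>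
        intro i hi
        have h1 : i < k := by omega
        exact le_trans (up i h1) (ih (i+1) (by omega))
    exact claim (k - j) j (by omega)
  · -- climb down
    have claim : ∀ d i, i = k + d → i ≤ n → t i ≤ t k := by
      intro d
      induction d with
      | zero => intro i hi _; subst hi; simp
      | succ d ih =>
        intro i hi hin
        have h1 : i = (k + d) + 1 := by omega
        subst h1
        exact le_trans (down (k+d) (by omega) (by omega)) (ih (k+d) rfl (by omega))
    exact claim (j - k) j (by omega) hj

lemma nat_sum_eq (n k : ℕ) (hk : k ≤ n) :
    ∑ j ∈ range (n+1), n.choose j * k ^ j * (n - k) ^ (n - j) = n ^ n := by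
  have := add_pow k (n - k) n
  rw [Nat.add_sub_cancel' hk] at this
  rw [this]
  apply Finset.sum_congr rfl
  intro j _
  push_cast
  ring

lemma nat_choose_upper (n k : ℕ) (hk : k ≤ n) :
    n.choose k * k ^ k * (n - k) ^ (n - k) ≤ n ^ n := by
  rw [← nat_sum_eq n k hk]
  exact Finset.single_le_sum
    (f := fun j => n.choose j * k ^ j * (n - k) ^ (n - j))
    (fun j _ => Nat.zero_le _) (Finset.mem_range.2 (Nat.lt_succ_of_le hk))

lemma nat_choose_lower (n k : ℕ) (hk : k ≤ n) :
    n ^ n ≤ (n + 1) * (n.choose k * k ^ k * (n - k) ^ (n - k)) := by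
  rw [← nat_sum_eq n k hk]
  calc ∑ j ∈ range (n+1), n.choose j * k ^ j * (n - k) ^ (n - j)
      ≤ (range (n+1)).card • (n.choose k * k ^ k * (n - k) ^ (n - k)) :=
        Finset.sum_le_card_nsmul _ _ _ (fun j hj => nat_term_le n k hk j
          (by have := Finset.mem_range.1 hj; omega))
    _ = (n + 1) * (n.choose k * k ^ k * (n - k) ^ (n - k)) := by
        rw [Finset.card_range, smul_eq_mul]

end NatBounds

lemma entI_grid (n k : ℕ) (hn : 0 < n) (hk : k ≤ n) :
    (n:ℝ) * entI ((2*(k:ℝ) - n)/n) =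
      (n:ℝ) * Real.log 2 + (k:ℝ) * Real.log k
        + ((n - k : ℕ):ℝ) * Real.log ((n - k : ℕ):ℝ) - (n:ℝ) * Real.log n := by
  have hn' : (0:ℝ) < n := by exact_mod_cast hn
  set a : ℝ := (k:ℝ) with ha
  set b : ℝ := ((n - k : ℕ):ℝ) with hb
  have hab : a + b = n := by
    rw [ha, hb]
    push_cast [Nat.cast_sub hk]
    ring
  have ha0 : 0 ≤ a := by positivity
  have hb0 : 0 ≤ b := by positivity
  have h1p : 1 + (2*a - n)/n = 2*a/n := by field_simp; ring
  have h1m : 1 - (2*a - n)/n = 2*b/n := by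
    rw [eq_div_iff hn'.ne']
    field_simp
    linarith [hab]
  have key : ∀ x : ℝ, 0 ≤ x → x * Real.log (2*x/n)
      = x * Real.log 2 + x * Real.log x - x * Real.log n := by
    intro x hx
    rcases eq_or_lt_of_le hx with rfl | hx
    · simp
    · rw [Real.log_div (by positivity) hn'.ne', Real.log_mul two_ne_zero hx.ne']
      ring
  unfold entI
  rw [h1p, h1m]
  have e1 : (n:ℝ) * (((2*a/n) * Real.log (2*a/n) + (2*b/n) * Real.log (2*b/n)) / 2)
      = a * Real.log (2*a/n) + b * Real.log (2*b/n) := by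
    field_simp
  rw [e1, key a ha0, key b hb0]
  have : a * Real.log 2 + b * Real.log 2 = (n:ℝ) * Real.log 2 := by
    rw [← hab]; ring
  have h2 : a * Real.log n + b * Real.log n = (n:ℝ) * Real.log n := by
    rw [← hab]; ring
  linarith [this, h2]

lemma kk_pos (k : ℕ) : (0:ℝ) < (k:ℝ) ^ k := by
  rcases Nat.eq_zero_or_pos k with rfl | hk
  · simp
  · have : (0:ℝ) < (k:ℝ) := by exact_mod_cast hk
    positivity

lemma exp_entI_eq (n k : ℕ) (hn : 0 < n) (hk : k ≤ n) :
    Real.exp ((n:ℝ) * Real.log 2 - (n:ℝ) * entI ((2*(k:ℝ) - n)/n))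
      = (n:ℝ)^n / ((k:ℝ)^k * ((n-k:ℕ):ℝ)^(n-k)) := by
  have hn' : (0:ℝ) < n := by exact_mod_cast hn
  have hkk := kk_pos k
  have hnk := kk_pos (n - k)
  have hpos : (0:ℝ) < (n:ℝ)^n / ((k:ℝ)^k * ((n-k:ℕ):ℝ)^(n-k)) := by positivity
  rw [← Real.exp_log hpos]
  congr 1
  rw [Real.log_div (by positivity) (by positivity),
    Real.log_mul hkk.ne' hnk.ne', Real.log_pow, Real.log_pow, Real.log_pow]
  rw [entI_grid n k hn hk]
  push_cast
  ring

lemma choose_le_exp (n k : ℕ) (hn : 0 < n) (hk : k ≤ n) :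
    (n.choose k : ℝ) ≤ Real.exp ((n:ℝ) * Real.log 2 - (n:ℝ) * entI ((2*(k:ℝ) - n)/n)) := by
  rw [exp_entI_eq n k hn hk, le_div_iff₀ (mul_pos (kk_pos k) (kk_pos (n-k)))]
  have := nat_choose_upper n k hk
  have hcast : ((n.choose k * k ^ k * (n - k) ^ (n - k) : ℕ) : ℝ) ≤ (((n:ℕ) ^ n : ℕ) : ℝ) := by
    exact_mod_cast this
  push_cast at hcast
  calc (n.choose k : ℝ) * ((k:ℝ)^k * ((n-k:ℕ):ℝ)^(n-k))
      = (n.choose k : ℝ) * (k:ℝ)^k * ((n-k:ℕ):ℝ)^(n-k) := by ring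
    _ ≤ (n:ℝ)^n := by exact_mod_cast hcast

lemma exp_le_choose (n k : ℕ) (hn : 0 < n) (hk : k ≤ n) :
    Real.exp ((n:ℝ) * Real.log 2 - (n:ℝ) * entI ((2*(k:ℝ) - n)/n))
      ≤ ((n:ℝ) + 1) * (n.choose k : ℝ) := by
  rw [exp_entI_eq n k hn hk, div_le_iff₀ (mul_pos (kk_pos k) (kk_pos (n-k)))]
  have := nat_choose_lower n k hk
  have hcast : (((n:ℕ) ^ n : ℕ) : ℝ) ≤ (((n + 1) * (n.choose k * k ^ k * (n - k) ^ (n - k)) : ℕ) : ℝ) := by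
    exact_mod_cast this
  push_cast at hcast
  calc (n:ℝ)^n ≤ ((n:ℝ) + 1) * ((n.choose k : ℝ) * (k:ℝ)^k * ((n-k:ℕ):ℝ)^(n-k)) := hcast
    _ = ((n:ℝ) + 1) * (n.choose k : ℝ) * ((k:ℝ)^k * ((n-k:ℕ):ℝ)^(n-k)) := by ring

def spinEquiv (n : ℕ) : ((Fin n → Bool) × (Fin n → Bool)) ≃ (Fin (n + n) → Bool) where
  toFun p := fun i => Sum.elim p.1 p.2 (finSumFinEquiv.symm i)
  invFun σ := (fun a => σ (finSumFinEquiv (Sum.inl a)), fun b => σ (finSumFinEquiv (Sum.inr b)))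
  left_inv p := by
    refine Prod.ext ?_ ?_ <;> funext a
    · show Sum.elim p.1 p.2 (finSumFinEquiv.symm (finSumFinEquiv (Sum.inl a))) = _
      rw [Equiv.symm_apply_apply]
      rfl
    · show Sum.elim p.1 p.2 (finSumFinEquiv.symm (finSumFinEquiv (Sum.inr a))) = _
      rw [Equiv.symm_apply_apply]
      rfl
  right_inv σ := by
    funext i
    show Sum.elim (fun a => σ (finSumFinEquiv (Sum.inl a)))
      (fun b => σ (finSumFinEquiv (Sum.inr b))) (finSumFinEquiv.symm i) = σ i
    rcases h : finSumFinEquiv.symm i with a | b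
    · rw [Sum.elim_inl, ← h, Equiv.apply_symm_apply]
    · rw [Sum.elim_inr, ← h, Equiv.apply_symm_apply]

lemma coe_left (n : ℕ) (a : Fin n) :
    ((finSumFinEquiv (Sum.inl a) : Fin (n+n)) : ℕ) = (a : ℕ) := by
  rw [finSumFinEquiv_apply_left]; rfl

lemma coe_right (n : ℕ) (b : Fin n) :
    ((finSumFinEquiv (Sum.inr b) : Fin (n+n)) : ℕ) = n + (b : ℕ) := by
  rw [finSumFinEquiv_apply_right]; rfl

lemma spinEquiv_left (n : ℕ) (p : (Fin n → Bool) × (Fin n → Bool)) (a : Fin n) :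
    spinEquiv n p (finSumFinEquiv (Sum.inl a)) = p.1 a := by
  show Sum.elim p.1 p.2 (finSumFinEquiv.symm (finSumFinEquiv (Sum.inl a))) = _
  rw [Equiv.symm_apply_apply]
  rfl

lemma spinEquiv_right (n : ℕ) (p : (Fin n → Bool) × (Fin n → Bool)) (b : Fin n) :
    spinEquiv n p (finSumFinEquiv (Sum.inr b)) = p.2 b := by
  show Sum.elim p.1 p.2 (finSumFinEquiv.symm (finSumFinEquiv (Sum.inr b))) = _
  rw [Equiv.symm_apply_apply]
  rfl

lemma mag1_spinEquiv (n : ℕ) (p : (Fin n → Bool) × (Fin n → Bool)) :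
    mag1 n (spinEquiv n p) = (1/(n:ℝ)) * ∑ i : Fin n, spin (p.1 i) := by
  unfold mag1
  congr 1
  rw [← Equiv.sum_comp finSumFinEquiv
    (fun i : Fin (n+n) => if (i : ℕ) < n then spin (spinEquiv n p i) else 0)]
  rw [Fintype.sum_sum_type]
  have h1 : ∀ a : Fin n,
      (if ((finSumFinEquiv (Sum.inl a) : Fin (n+n)) : ℕ) < n
        then spin (spinEquiv n p (finSumFinEquiv (Sum.inl a))) else 0) = spin (p.1 a) := by
    intro a
    rw [if_pos (by rw [coe_left]; exact a.isLt), spinEquiv_left]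
  have h2 : ∀ b : Fin n,
      (if ((finSumFinEquiv (Sum.inr b) : Fin (n+n)) : ℕ) < n
        then spin (spinEquiv n p (finSumFinEquiv (Sum.inr b))) else 0) = 0 := by
    intro b
    rw [if_neg (by rw [coe_right]; omega)]
  rw [Finset.sum_congr rfl (fun a _ => h1 a), Finset.sum_congr rfl (fun b _ => h2 b)]
  simp

lemma mag2_spinEquiv (n : ℕ) (p : (Fin n → Bool) × (Fin n → Bool)) :
    mag2 n (spinEquiv n p) = (1/(n:ℝ)) * ∑ i : Fin n, spin (p.2 i) := by
  unfold mag2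
  congr 1
  rw [← Equiv.sum_comp finSumFinEquiv
    (fun i : Fin (n+n) => if n ≤ (i : ℕ) then spin (spinEquiv n p i) else 0)]
  rw [Fintype.sum_sum_type]
  have h1 : ∀ a : Fin n,
      (if n ≤ ((finSumFinEquiv (Sum.inl a) : Fin (n+n)) : ℕ)
        then spin (spinEquiv n p (finSumFinEquiv (Sum.inl a))) else 0) = 0 := by
    intro a
    rw [if_neg (by rw [coe_left]; have := a.isLt; omega)]
  have h2 : ∀ b : Fin n,
      (if n ≤ ((finSumFinEquiv (Sum.inr b) : Fin (n+n)) : ℕ)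
        then spin (spinEquiv n p (finSumFinEquiv (Sum.inr b))) else 0) = spin (p.2 b) := by
    intro b
    rw [if_pos (by rw [coe_right]; omega), spinEquiv_right]
  rw [Finset.sum_congr rfl (fun a _ => h1 a), Finset.sum_congr rfl (fun b _ => h2 b)]
  simp

def boolFinsetEquiv (n : ℕ) : (Fin n → Bool) ≃ Finset (Fin n) where
  toFun τ := Finset.univ.filter (fun i => τ i = true)
  invFun A := fun i => decide (i ∈ A)
  left_inv τ := by
    funext i
    by_cases h : τ i = true <;> simp [h]
  right_inv A := by
    ext i
    simp

lemma spin_sum_finset (n : ℕ) (A : Finset (Fin n)) :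
    ∑ i : Fin n, spin (decide (i ∈ A)) = 2 * (A.card : ℝ) - n := by
  have h : ∀ i : Fin n, spin (decide (i ∈ A)) = (if i ∈ A then (2:ℝ) else 0) - 1 := by
    intro i
    by_cases h : i ∈ A <;> simp [spin, h] <;> norm_num
  rw [Finset.sum_congr rfl (fun i _ => h i), Finset.sum_sub_distrib]
  have h1 : ∑ i : Fin n, (if i ∈ A then (2:ℝ) else 0) = 2 * (A.card : ℝ) := by
    rw [Finset.sum_ite_mem, Finset.univ_inter, Finset.sum_const]
    simp [mul_comm]
  rw [h1]
  simp [Finset.card_univ, mul_comm]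

lemma sum_fun_count (n : ℕ) (F : ℝ → ℝ) :
    ∑ τ : Fin n → Bool, F ((1/(n:ℝ)) * ∑ i : Fin n, spin (τ i))
      = ∑ k ∈ range (n+1), (n.choose k : ℝ) * F ((2*(k:ℝ) - n)/n) := by
  rw [← Equiv.sum_comp (boolFinsetEquiv n).symm
    (fun τ : Fin n → Bool => F ((1/(n:ℝ)) * ∑ i : Fin n, spin (τ i)))]
  have h : ∀ A : Finset (Fin n),
      F ((1/(n:ℝ)) * ∑ i : Fin n, spin ((boolFinsetEquiv n).symm A i))
        = F ((2*(A.card:ℝ) - n)/n) := by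
    intro A
    congr 1
    show (1/(n:ℝ)) * ∑ i : Fin n, spin (decide (i ∈ A)) = _
    rw [spin_sum_finset]
    ring
  rw [Finset.sum_congr rfl (fun A _ => h A)]
  rw [← Finset.powerset_univ, Finset.sum_powerset]
  rw [Finset.card_univ, Fintype.card_fin]
  apply Finset.sum_congr rfl
  intro k _
  have := Finset.sum_powersetCard k (Finset.univ : Finset (Fin n))
    (fun m => F ((2*(m:ℝ) - n)/n))
  rw [this, Finset.card_univ, Fintype.card_fin, nsmul_eq_mul]

lemma ZSym_eq (β J11 J12 : ℝ) (n : ℕ) :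
    ZSym β J11 J12 n = ∑ k1 ∈ range (n+1), ∑ k2 ∈ range (n+1),
      (n.choose k1 : ℝ) * (n.choose k2 : ℝ) *
        Real.exp (β * ((n:ℝ) + n) *
          gSym J11 J12 ((2*(k1:ℝ) - n)/n) ((2*(k2:ℝ) - n)/n)) := by
  unfold ZSym
  rw [← Equiv.sum_comp (spinEquiv n)
    (fun σ : Fin (n+n) → Bool =>
      Real.exp (β * ((n:ℝ) + n) * gSym J11 J12 (mag1 n σ) (mag2 n σ)))]
  have h : ∀ p : (Fin n → Bool) × (Fin n → Bool),
      Real.exp (β * ((n:ℝ) + n) * gSym J11 J12 (mag1 n (spinEquiv n p)) (mag2 n (spinEquiv n p)))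
        = Real.exp (β * ((n:ℝ) + n) * gSym J11 J12
            ((1/(n:ℝ)) * ∑ i : Fin n, spin (p.1 i)) ((1/(n:ℝ)) * ∑ i : Fin n, spin (p.2 i))) := by
    intro p
    rw [mag1_spinEquiv, mag2_spinEquiv]
  rw [Finset.sum_congr rfl (fun p _ => h p)]
  rw [Fintype.sum_prod_type]
  have outer : ∀ τ1 : Fin n → Bool,
      (∑ τ2 : Fin n → Bool, Real.exp (β * ((n:ℝ) + n) * gSym J11 J12
          ((1/(n:ℝ)) * ∑ i : Fin n, spin (τ1 i)) ((1/(n:ℝ)) * ∑ i : Fin n, spin (τ2 i))))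
        = ∑ k2 ∈ range (n+1), (n.choose k2 : ℝ) *
            Real.exp (β * ((n:ℝ) + n) * gSym J11 J12
              ((1/(n:ℝ)) * ∑ i : Fin n, spin (τ1 i)) ((2*(k2:ℝ) - n)/n)) := by
    intro τ1
    exact sum_fun_count n (fun v => Real.exp (β * ((n:ℝ) + n) * gSym J11 J12
      ((1/(n:ℝ)) * ∑ i : Fin n, spin (τ1 i)) v))
  rw [Finset.sum_congr rfl (fun τ1 _ => outer τ1)]
  have swap : ∑ τ1 : Fin n → Bool, ∑ k2 ∈ range (n+1), (n.choose k2 : ℝ) *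
      Real.exp (β * ((n:ℝ) + n) * gSym J11 J12
        ((1/(n:ℝ)) * ∑ i : Fin n, spin (τ1 i)) ((2*(k2:ℝ) - n)/n))
      = ∑ k2 ∈ range (n+1), (n.choose k2 : ℝ) *
          ∑ τ1 : Fin n → Bool, Real.exp (β * ((n:ℝ) + n) * gSym J11 J12
            ((1/(n:ℝ)) * ∑ i : Fin n, spin (τ1 i)) ((2*(k2:ℝ) - n)/n)) := by
    rw [Finset.sum_comm]
    exact Finset.sum_congr rfl (fun k2 _ => by rw [Finset.mul_sum])
  rw [swap]
  have inner : ∀ k2 ∈ range (n+1),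
      (n.choose k2 : ℝ) * ∑ τ1 : Fin n → Bool, Real.exp (β * ((n:ℝ) + n) * gSym J11 J12
        ((1/(n:ℝ)) * ∑ i : Fin n, spin (τ1 i)) ((2*(k2:ℝ) - n)/n))
      = (n.choose k2 : ℝ) * ∑ k1 ∈ range (n+1), (n.choose k1 : ℝ) *
          Real.exp (β * ((n:ℝ) + n) * gSym J11 J12 ((2*(k1:ℝ) - n)/n) ((2*(k2:ℝ) - n)/n)) := by
    intro k2 _
    congr 1
    exact sum_fun_count n (fun v => Real.exp (β * ((n:ℝ) + n) * gSym J11 J12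
      v ((2*(k2:ℝ) - n)/n)))
  rw [Finset.sum_congr rfl inner, Finset.sum_comm]
  apply Finset.sum_congr rfl
  intro k1 _
  rw [Finset.mul_sum]
  apply Finset.sum_congr rfl
  intro k2 _
  ring

lemma fSym_diag (β J11 J12 x : ℝ) :
    fSym β J11 J12 (x, -x) = psiF (β * (J11 - J12) / 4) x := by
  unfold fSym psiF
  simp only [entI_neg]
  ring

lemma fSym_le_psi (β J11 J12 x y : ℝ) (hJ12 : J12 < 0) (hβ : 0 < β) :
    fSym β J11 J12 (x, y)
      ≤ (psiF (β * (J11 - J12) / 4) x + psiF (β * (J11 - J12) / 4) y) / 2 := by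
  have key : β * J12 * (x + y)^2 ≤ 0 :=
    mul_nonpos_of_nonpos_of_nonneg (by nlinarith) (sq_nonneg _)
  unfold fSym psiF
  nlinarith [key]

lemma log_div_n_tendsto :
    Tendsto (fun n : ℕ => Real.log ((n:ℝ) + 1) / n) atTop (nhds 0) := by
  have h1 : Tendsto (fun x : ℝ => Real.log x / x) atTop (nhds 0) :=
    Real.isLittleO_log_id_atTop.tendsto_div_nhds_zero
  have h2 : Tendsto (fun n : ℕ => (n:ℝ) + 1) atTop atTop :=
    tendsto_atTop_add_const_right atTop 1 tendsto_natCast_atTop_atTop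
  have h3 : Tendsto (fun n : ℕ => Real.log ((n:ℝ) + 1) / ((n:ℝ) + 1)) atTop (nhds 0) :=
    h1.comp h2
  have h4 : Tendsto (fun n : ℕ => ((n:ℝ) + 1) / n) atTop (nhds 1) := by
    have : Tendsto (fun n : ℕ => 1 + 1 / (n:ℝ)) atTop (nhds (1 + 0)) :=
      tendsto_const_nhds.add tendsto_one_div_atTop_nhds_zero_nat
    rw [add_zero] at this
    apply this.congr'
    filter_upwards [eventually_ge_atTop 1] with n hn
    have hn' : (0:ℝ) < n := by exact_mod_cast hn
    field_simp
  have := h3.mul h4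
  rw [zero_mul] at this
  apply this.congr'
  filter_upwards [eventually_ge_atTop 1] with n hn
  have hn' : (0:ℝ) < n := by exact_mod_cast hn
  have hn1 : ((n:ℝ) + 1) ≠ 0 := by positivity
  field_simp

lemma main_limit (β J11 J12 : ℝ) (hJ12 : J12 < 0) (hβ : 0 < β) (xs : ℝ)
    (hxs0 : 0 ≤ xs) (hxs1 : xs < 1)
    (hmax : ∀ μ1, -1 ≤ μ1 → μ1 ≤ 1 → ∀ μ2, -1 ≤ μ2 → μ2 ≤ 1 →
      fSym β J11 J12 (μ1, μ2) ≤ psiF (β * (J11 - J12) / 4) xs) :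
    Tendsto (fun n : ℕ => (1 / ((n + n : ℕ) : ℝ)) * Real.log (ZSym β J11 J12 n))
      atTop (nhds (Real.log 2 + psiF (β * (J11 - J12) / 4) xs)) := by
  set c := β * (J11 - J12) / 4 with hc
  set S := psiF c xs with hS
  have expo : ∀ n : ℕ, ∀ μ1 μ2 : ℝ, β * ((n:ℝ) + n) * gSym J11 J12 μ1 μ2
      = 2 * n * fSym β J11 J12 (μ1, μ2) + (n:ℝ) * entI μ1 + (n:ℝ) * entI μ2 := by
    intro n μ1 μ2
    unfold gSym fSym
    ring
  have grid : ∀ n : ℕ, 0 < n → ∀ k : ℕ, k ≤ n →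
      -1 ≤ (2*(k:ℝ) - n)/n ∧ (2*(k:ℝ) - n)/n ≤ 1 := by
    intro n hn k hk
    have hn' : (0:ℝ) < n := by exact_mod_cast hn
    have hk' : (k:ℝ) ≤ n := by exact_mod_cast hk
    have hk0 : (0:ℝ) ≤ k := Nat.cast_nonneg k
    constructor
    · rw [le_div_iff₀ hn']
      nlinarith
    · rw [div_le_iff₀ hn']
      nlinarith
  have Zpos : ∀ n : ℕ, 0 < ZSym β J11 J12 n := by
    intro n
    unfold ZSym
    exact Finset.sum_pos (fun σ _ => Real.exp_pos _) Finset.univ_nonempty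
  -- upper bound
  have upper : ∀ n : ℕ, 0 < n →
      Real.log (ZSym β J11 J12 n)
        ≤ 2 * Real.log ((n:ℝ)+1) + 2*(n:ℝ)*(Real.log 2 + S) := by
    intro n hn
    have hn' : (0:ℝ) < n := by exact_mod_cast hn
    have trm : ∀ k1 ∈ range (n+1), ∀ k2 ∈ range (n+1),
        (n.choose k1 : ℝ) * (n.choose k2 : ℝ) *
          Real.exp (β * ((n:ℝ) + n) * gSym J11 J12 ((2*(k1:ℝ) - n)/n) ((2*(k2:ℝ) - n)/n))
        ≤ Real.exp (2*(n:ℝ)*(Real.log 2 + S)) := by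
      intro k1 hk1 k2 hk2
      have hk1' : k1 ≤ n := by have := Finset.mem_range.1 hk1; omega
      have hk2' : k2 ≤ n := by have := Finset.mem_range.1 hk2; omega
      set μ1 := (2*(k1:ℝ) - n)/n with hμ1
      set μ2 := (2*(k2:ℝ) - n)/n with hμ2
      have b1 := choose_le_exp n k1 hn hk1'
      have b2 := choose_le_exp n k2 hn hk2'
      have step : (n.choose k1 : ℝ) * (n.choose k2 : ℝ) *
          Real.exp (β * ((n:ℝ) + n) * gSym J11 J12 μ1 μ2)
          ≤ Real.exp ((n:ℝ) * Real.log 2 - (n:ℝ) * entI μ1)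
            * Real.exp ((n:ℝ) * Real.log 2 - (n:ℝ) * entI μ2)
            * Real.exp (β * ((n:ℝ) + n) * gSym J11 J12 μ1 μ2) := by
        apply mul_le_mul_of_nonneg_right _ (Real.exp_pos _).le
        exact mul_le_mul b1 b2 (Nat.cast_nonneg _) (Real.exp_pos _).le
      have eq1 : Real.exp ((n:ℝ) * Real.log 2 - (n:ℝ) * entI μ1)
            * Real.exp ((n:ℝ) * Real.log 2 - (n:ℝ) * entI μ2)
            * Real.exp (β * ((n:ℝ) + n) * gSym J11 J12 μ1 μ2)
          = Real.exp (2*(n:ℝ)*(Real.log 2 + fSym β J11 J12 (μ1, μ2))) := by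
        rw [← Real.exp_add, ← Real.exp_add, expo]
        congr 1
        ring
      have hf : fSym β J11 J12 (μ1, μ2) ≤ S := by
        obtain ⟨l1, r1⟩ := grid n hn k1 hk1'
        obtain ⟨l2, r2⟩ := grid n hn k2 hk2'
        exact hmax μ1 l1 r1 μ2 l2 r2
      calc (n.choose k1 : ℝ) * (n.choose k2 : ℝ) *
            Real.exp (β * ((n:ℝ) + n) * gSym J11 J12 μ1 μ2)
          ≤ Real.exp (2*(n:ℝ)*(Real.log 2 + fSym β J11 J12 (μ1, μ2))) := by
            rw [← eq1]; exact step
        _ ≤ Real.exp (2*(n:ℝ)*(Real.log 2 + S)) := by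
            apply Real.exp_le_exp.2
            nlinarith [hf, hn']
    have sum_le : ZSym β J11 J12 n ≤ ((n:ℝ)+1)^2 * Real.exp (2*(n:ℝ)*(Real.log 2 + S)) := by
      rw [ZSym_eq]
      calc ∑ k1 ∈ range (n+1), ∑ k2 ∈ range (n+1), (n.choose k1 : ℝ) * (n.choose k2 : ℝ) *
            Real.exp (β * ((n:ℝ) + n) * gSym J11 J12 ((2*(k1:ℝ) - n)/n) ((2*(k2:ℝ) - n)/n))
          ≤ ∑ k1 ∈ range (n+1), ∑ k2 ∈ range (n+1),
              Real.exp (2*(n:ℝ)*(Real.log 2 + S)) := by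
            apply Finset.sum_le_sum
            intro k1 hk1
            exact Finset.sum_le_sum (fun k2 hk2 => trm k1 hk1 k2 hk2)
        _ = ((n:ℝ)+1)^2 * Real.exp (2*(n:ℝ)*(Real.log 2 + S)) := by
            rw [Finset.sum_const, Finset.sum_const, Finset.card_range, nsmul_eq_mul,
              nsmul_eq_mul]
            push_cast
            ring
    calc Real.log (ZSym β J11 J12 n)
        ≤ Real.log (((n:ℝ)+1)^2 * Real.exp (2*(n:ℝ)*(Real.log 2 + S))) :=
          Real.log_le_log (Zpos n) sum_le
      _ = 2 * Real.log ((n:ℝ)+1) + 2*(n:ℝ)*(Real.log 2 + S) := by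
          rw [Real.log_mul (by positivity) (Real.exp_pos _).ne', Real.log_exp,
            Real.log_pow]
          push_cast
          ring
  -- the approximating grid point
  set kn : ℕ → ℕ := fun n => ⌈((n:ℝ) * (1 + xs)) / 2⌉₊ with hkn
  have hkn_le : ∀ n : ℕ, 0 < n → kn n ≤ n := by
    intro n hn
    have hn' : (0:ℝ) < n := by exact_mod_cast hn
    rw [hkn]
    apply Nat.ceil_le.2
    rw [div_le_iff₀ (by norm_num : (0:ℝ) < 2)]
    push_cast
    nlinarith [hxs1, hn']
  set muf : ℕ → ℝ := fun n => (2*((kn n:ℕ):ℝ) - n)/n with hmuf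
  have hmu_lb : ∀ n : ℕ, 0 < n → xs ≤ muf n := by
    intro n hn
    have hn' : (0:ℝ) < n := by exact_mod_cast hn
    have h1 : ((n:ℝ) * (1 + xs)) / 2 ≤ (kn n : ℝ) := Nat.le_ceil _
    rw [hmuf, le_div_iff₀ hn']
    nlinarith [h1]
  have hmu_ub : ∀ n : ℕ, 0 < n → muf n ≤ xs + 2/n := by
    intro n hn
    have hn' : (0:ℝ) < n := by exact_mod_cast hn
    have h1 : (kn n : ℝ) < ((n:ℝ) * (1 + xs)) / 2 + 1 :=
      Nat.ceil_lt_add_one (by positivity)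
    rw [hmuf, div_le_iff₀ hn']
    have : (xs + 2/n) * n = xs * n + 2 := by field_simp
    rw [this]
    nlinarith [h1]
  have hmu_tendsto : Tendsto muf atTop (nhds xs) := by
    apply tendsto_of_tendsto_of_tendsto_of_le_of_le'
      (tendsto_const_nhds : Tendsto (fun _ : ℕ => xs) atTop (nhds xs))
      (show Tendsto (fun n : ℕ => xs + 2/(n:ℝ)) atTop (nhds xs) by
        have h2 : Tendsto (fun n : ℕ => 2/(n:ℝ)) atTop (nhds 0) := by
          have := tendsto_one_div_atTop_nhds_zero_nat.const_mul (2:ℝ)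
          rw [mul_zero] at this
          apply this.congr
          intro n
          ring
        have := (tendsto_const_nhds : Tendsto (fun _ : ℕ => xs) atTop (nhds xs)).add h2
        rw [add_zero] at this
        exact this)
    · filter_upwards [eventually_gt_atTop 0] with n hn
      exact hmu_lb n hn
    · filter_upwards [eventually_gt_atTop 0] with n hn
      exact hmu_ub n hn
  -- lower bound
  have lower : ∀ n : ℕ, 0 < n →
      2*(n:ℝ)*(Real.log 2 + psiF c (muf n)) - 2*Real.log ((n:ℝ)+1)
        ≤ Real.log (ZSym β J11 J12 n) := by
    intro n hn
    have hn' : (0:ℝ) < n := by exact_mod_cast hn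
    have hkle := hkn_le n hn
    have hk2le : n - kn n ≤ n := Nat.sub_le _ _
    have hμ1 : (2*((kn n : ℕ):ℝ) - n)/n = muf n := by rw [hmuf]
    have hμ2 : (2*(((n - kn n : ℕ)):ℝ) - n)/n = -(muf n) := by
      rw [hmuf]
      have h : (2*(((n - kn n : ℕ)):ℝ) - n) = -(2*((kn n : ℕ):ℝ) - n) := by
        push_cast [Nat.cast_sub hkle]
        ring
      rw [h, neg_div]
    have hchoose2 : (n.choose (n - kn n) : ℝ) = (n.choose (kn n) : ℝ) := by
      rw [Nat.choose_symm hkle]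
    have mem1 : kn n ∈ range (n+1) := Finset.mem_range.2 (by omega)
    have mem2 : n - kn n ∈ range (n+1) := Finset.mem_range.2 (by omega)
    -- single term (in grid form) is below the double sum
    have inner_le : (n.choose (kn n) : ℝ) * (n.choose (n - kn n) : ℝ) *
        Real.exp (β * ((n:ℝ) + n) *
          gSym J11 J12 ((2*((kn n : ℕ):ℝ) - n)/n) ((2*(((n - kn n : ℕ)):ℝ) - n)/n))
        ≤ ∑ k2 ∈ range (n+1), (n.choose (kn n) : ℝ) * (n.choose k2 : ℝ) *
            Real.exp (β * ((n:ℝ) + n) *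
              gSym J11 J12 ((2*((kn n:ℕ):ℝ) - n)/n) ((2*(k2:ℝ) - n)/n)) :=
      Finset.single_le_sum
        (f := fun k2 => (n.choose (kn n) : ℝ) * (n.choose k2 : ℝ) *
          Real.exp (β * ((n:ℝ) + n) *
            gSym J11 J12 ((2*((kn n:ℕ):ℝ) - n)/n) ((2*(k2:ℝ) - n)/n)))
        (fun k2 _ => by positivity) mem2
    have outer_le : ∑ k2 ∈ range (n+1), (n.choose (kn n) : ℝ) * (n.choose k2 : ℝ) *
          Real.exp (β * ((n:ℝ) + n) *
            gSym J11 J12 ((2*((kn n:ℕ):ℝ) - n)/n) ((2*(k2:ℝ) - n)/n))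
        ≤ ∑ k1 ∈ range (n+1), ∑ k2 ∈ range (n+1),
            (n.choose k1 : ℝ) * (n.choose k2 : ℝ) *
            Real.exp (β * ((n:ℝ) + n) *
              gSym J11 J12 ((2*(k1:ℝ) - n)/n) ((2*(k2:ℝ) - n)/n)) :=
      Finset.single_le_sum
        (f := fun k1 => ∑ k2 ∈ range (n+1),
          (n.choose k1 : ℝ) * (n.choose k2 : ℝ) *
          Real.exp (β * ((n:ℝ) + n) *
            gSym J11 J12 ((2*(k1:ℝ) - n)/n) ((2*(k2:ℝ) - n)/n)))
        (fun k1 _ => Finset.sum_nonneg (fun k2 _ => by positivity)) mem1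
    have single : (n.choose (kn n) : ℝ) * (n.choose (n - kn n) : ℝ) *
        Real.exp (β * ((n:ℝ) + n) *
          gSym J11 J12 ((2*((kn n : ℕ):ℝ) - n)/n) ((2*(((n - kn n : ℕ)):ℝ) - n)/n))
        ≤ ZSym β J11 J12 n := by
      rw [ZSym_eq]
      exact le_trans inner_le outer_le
    -- lower-bound the single term
    have eb1 := exp_le_choose n (kn n) hn hkle
    have eb2 := exp_le_choose n (n - kn n) hn hk2le
    have hnp1 : (0:ℝ) < (n:ℝ) + 1 := by positivity
    have cb1 : Real.exp ((n:ℝ) * Real.log 2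
          - (n:ℝ) * entI ((2*((kn n : ℕ):ℝ) - n)/n) - Real.log ((n:ℝ)+1))
        ≤ (n.choose (kn n) : ℝ) := by
      rw [Real.exp_sub, Real.exp_log hnp1, div_le_iff₀ hnp1]
      calc Real.exp ((n:ℝ) * Real.log 2 - (n:ℝ) * entI ((2*((kn n : ℕ):ℝ) - n)/n))
          ≤ ((n:ℝ) + 1) * (n.choose (kn n) : ℝ) := eb1
        _ = (n.choose (kn n) : ℝ) * ((n:ℝ) + 1) := by ring
    have cb2 : Real.exp ((n:ℝ) * Real.log 2
          - (n:ℝ) * entI ((2*(((n - kn n : ℕ)):ℝ) - n)/n) - Real.log ((n:ℝ)+1))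
        ≤ (n.choose (n - kn n) : ℝ) := by
      rw [Real.exp_sub, Real.exp_log hnp1, div_le_iff₀ hnp1]
      calc Real.exp ((n:ℝ) * Real.log 2 - (n:ℝ) * entI ((2*(((n - kn n : ℕ)):ℝ) - n)/n))
          ≤ ((n:ℝ) + 1) * (n.choose (n - kn n) : ℝ) := eb2
        _ = (n.choose (n - kn n) : ℝ) * ((n:ℝ) + 1) := by ring
    have prod_ge : Real.exp (2*(n:ℝ)*(Real.log 2 + psiF c (muf n)) - 2*Real.log ((n:ℝ)+1))
        ≤ (n.choose (kn n) : ℝ) * (n.choose (n - kn n) : ℝ) *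
          Real.exp (β * ((n:ℝ) + n) *
            gSym J11 J12 ((2*((kn n : ℕ):ℝ) - n)/n) ((2*(((n - kn n : ℕ)):ℝ) - n)/n)) := by
      have eqexp : Real.exp (2*(n:ℝ)*(Real.log 2 + psiF c (muf n)) - 2*Real.log ((n:ℝ)+1))
          = Real.exp ((n:ℝ) * Real.log 2
              - (n:ℝ) * entI ((2*((kn n : ℕ):ℝ) - n)/n) - Real.log ((n:ℝ)+1))
            * Real.exp ((n:ℝ) * Real.log 2
              - (n:ℝ) * entI ((2*(((n - kn n : ℕ)):ℝ) - n)/n) - Real.log ((n:ℝ)+1))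
            * Real.exp (β * ((n:ℝ) + n) *
              gSym J11 J12 ((2*((kn n : ℕ):ℝ) - n)/n) ((2*(((n - kn n : ℕ)):ℝ) - n)/n)) := by
        rw [← Real.exp_add, ← Real.exp_add]
        congr 1
        rw [hμ1, hμ2, expo n (muf n) (-(muf n)), fSym_diag, entI_neg]
        show 2*(n:ℝ)*(Real.log 2 + psiF c (muf n)) - 2*Real.log ((n:ℝ)+1)
          = (n:ℝ) * Real.log 2 - (n:ℝ) * entI (muf n) - Real.log ((n:ℝ)+1)
            + ((n:ℝ) * Real.log 2 - (n:ℝ) * entI (muf n) - Real.log ((n:ℝ)+1))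
            + (2 * (n:ℝ) * psiF (β * (J11 - J12) / 4) (muf n)
              + (n:ℝ) * entI (muf n) + (n:ℝ) * entI (muf n))
        rw [← hc]
        ring
      rw [eqexp]
      apply mul_le_mul_of_nonneg_right _ (Real.exp_pos _).le
      exact mul_le_mul cb1 cb2 (Real.exp_pos _).le (Nat.cast_nonneg _)
    have final := le_trans prod_ge single
    calc 2*(n:ℝ)*(Real.log 2 + psiF c (muf n)) - 2*Real.log ((n:ℝ)+1)
        = Real.log (Real.exp (2*(n:ℝ)*(Real.log 2 + psiF c (muf n))
            - 2*Real.log ((n:ℝ)+1))) := (Real.log_exp _).symm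
      _ ≤ Real.log (ZSym β J11 J12 n) := Real.log_le_log (Real.exp_pos _) final
  -- assemble the squeeze
  have hpsi_cont : Continuous (psiF c) :=
    (continuous_const.mul (continuous_pow 2)).sub continuous_entI
  have hA : Tendsto (fun n : ℕ => Real.log 2 + psiF c (muf n) - Real.log ((n:ℝ)+1)/n)
      atTop (nhds (Real.log 2 + S)) := by
    have h1 : Tendsto (fun n : ℕ => psiF c (muf n)) atTop (nhds (psiF c xs)) :=
      (hpsi_cont.tendsto xs).comp hmu_tendsto
    have := ((tendsto_const_nhds : Tendsto (fun _ : ℕ => Real.log 2) atTop _).add h1).sub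
      log_div_n_tendsto
    rw [sub_zero] at this
    exact this
  have hB : Tendsto (fun n : ℕ => Real.log 2 + S + Real.log ((n:ℝ)+1)/n)
      atTop (nhds (Real.log 2 + S)) := by
    have := (tendsto_const_nhds : Tendsto (fun _ : ℕ => Real.log 2 + S) atTop _).add
      log_div_n_tendsto
    rw [add_zero] at this
    exact this
  apply tendsto_of_tendsto_of_tendsto_of_le_of_le' hA hB
  · filter_upwards [eventually_gt_atTop 0] with n hn
    have hn' : (0:ℝ) < n := by exact_mod_cast hn
    have hN : ((n + n : ℕ) : ℝ) = 2 * n := by push_cast; ring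
    rw [hN]
    calc Real.log 2 + psiF c (muf n) - Real.log ((n:ℝ)+1)/n
        = (1/(2*(n:ℝ))) * (2*(n:ℝ)*(Real.log 2 + psiF c (muf n)) - 2*Real.log ((n:ℝ)+1)) := by
          field_simp
      _ ≤ (1/(2*(n:ℝ))) * Real.log (ZSym β J11 J12 n) := by
          apply mul_le_mul_of_nonneg_left (lower n hn) (by positivity)
  · filter_upwards [eventually_gt_atTop 0] with n hn
    have hn' : (0:ℝ) < n := by exact_mod_cast hn
    have hN : ((n + n : ℕ) : ℝ) = 2 * n := by push_cast; ring
    rw [hN]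
    calc (1/(2*(n:ℝ))) * Real.log (ZSym β J11 J12 n)
        ≤ (1/(2*(n:ℝ))) * (2 * Real.log ((n:ℝ)+1) + 2*(n:ℝ)*(Real.log 2 + S)) := by
          apply mul_le_mul_of_nonneg_left (upper n hn) (by positivity)
      _ = Real.log 2 + S + Real.log ((n:ℝ)+1)/n := by
          field_simp
          ring

/-- Proposition 3, part 1: with λ_M = J₁₁ − J₁₂ and t = 2/(βλ_M), the pressure of the
symmetric model with J₁₁ = J₂₂ > 0, J₁₂ < 0, h = 0 converges, along even N = n + n, to
log 2 (= log 2 + f(0,0)) if t ≥ 1, and to log 2 + f(x̃,−x̃) if t < 1, where x̃ is the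
unique solution in (0,1) of x = tanh((βλ_M/2)x). -/
theorem prop3_part1 (β J11 J12 : ℝ) (hJ11 : 0 < J11) (hJ12 : J12 < 0) (hβ : 0 < β) :
    (1 ≤ 2 / (β * (J11 - J12)) →
      Tendsto (fun n : ℕ => (1 / ((n + n : ℕ) : ℝ)) * Real.log (ZSym β J11 J12 n))
        atTop (nhds (Real.log 2))) ∧
    (2 / (β * (J11 - J12)) < 1 →
      ∀ xt : ℝ, xt ∈ Set.Ioo (0 : ℝ) 1 →
        xt = Real.tanh (β * (J11 - J12) / 2 * xt) →
        (∀ y ∈ Set.Ioo (0 : ℝ) 1, y = Real.tanh (β * (J11 - J12) / 2 * y) → y = xt) →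
        Tendsto (fun n : ℕ => (1 / ((n + n : ℕ) : ℝ)) * Real.log (ZSym β J11 J12 n))
          atTop (nhds (Real.log 2 + fSym β J11 J12 (xt, -xt)))) := by
  have hlam : 0 < J11 - J12 := by linarith
  have hbl : 0 < β * (J11 - J12) := mul_pos hβ hlam
  constructor
  · intro ht
    have h2 : β * (J11 - J12) ≤ 2 := by
      rw [le_div_iff₀ hbl] at ht
      linarith
    have hcle : β * (J11 - J12) / 4 ≤ 1/2 := by linarith
    have hmax : ∀ μ1, -1 ≤ μ1 → μ1 ≤ 1 → ∀ μ2, -1 ≤ μ2 → μ2 ≤ 1 →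
        fSym β J11 J12 (μ1, μ2) ≤ psiF (β * (J11 - J12) / 4) 0 := by
      intro μ1 ha1 hb1 μ2 ha2 hb2
      rw [psiF_zero]
      have h := fSym_le_psi β J11 J12 μ1 μ2 hJ12 hβ
      have p1 := psiF_nonpos hcle ha1 hb1
      have p2 := psiF_nonpos hcle ha2 hb2
      linarith
    have := main_limit β J11 J12 hJ12 hβ 0 le_rfl one_pos hmax
    rw [psiF_zero, add_zero] at this
    exact this
  · intro ht xt hxt hfixt huniq
    have h2 : 2 < β * (J11 - J12) := by
      rw [div_lt_one hbl] at ht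
      linarith
    have hcgt : 1/2 < β * (J11 - J12) / 4 := by linarith
    obtain ⟨xs, hxsIoo, hxsmax, hxsfix⟩ := psiF_max hcgt
    have hfix' : xs = Real.tanh (β * (J11 - J12) / 2 * xs) := by
      have h : β * (J11 - J12) / 2 * xs = 2 * (β * (J11 - J12) / 4) * xs := by ring
      rw [h]
      exact hxsfix
    have hxseq : xs = xt := huniq xs hxsIoo hfix'
    have hmax : ∀ μ1, -1 ≤ μ1 → μ1 ≤ 1 → ∀ μ2, -1 ≤ μ2 → μ2 ≤ 1 →
        fSym β J11 J12 (μ1, μ2) ≤ psiF (β * (J11 - J12) / 4) xs := by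
      intro μ1 ha1 hb1 μ2 ha2 hb2
      have h := fSym_le_psi β J11 J12 μ1 μ2 hJ12 hβ
      have p1 := hxsmax μ1 ha1 hb1
      have p2 := hxsmax μ2 ha2 hb2
      linarith
    have hlim := main_limit β J11 J12 hJ12 hβ xs hxsIoo.1.le hxsIoo.2 hmax
    rw [hxseq] at hlim
    rw [show Real.log 2 + fSym β J11 J12 (xt, -xt)
        = Real.log 2 + psiF (β * (J11 - J12) / 4) xt from by rw [fSym_diag]]
    exact hlim
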